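/- In the fibring of the conjunction fragments of 3-valued Łukasiewicz logic Ł₃ and 3-valued Gödel logic G₃ via the pair (λ₂, μ₂) — where λ₂ swaps 0 and 1/2 and fixes 1, and μ₂ = λ₂⁻¹ — the connectives &_Ł and &_G are identified: for all (&_Ł,&_G)-associated formulas φ₁, φ₂ and every assignment ā over the six-element fibred support, φ₁(ā) is designated iff φ₂(ā) is designated; this holds even though λ₂ is not a homomorphism between the conjunction fragments. -/
import Mathlib


set_option autoImplicit false

namespace Fibring

/-- Propositional formulas over a signature `C` with arity function `ar`. -/
inductive Fm (C : Type) (ar : C → ℕ) : Type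
  | var : ℕ → Fm C ar
  | app : (c : C) → (Fin (ar c) → Fm C ar) → Fm C ar

/-- Homomorphic extension of a valuation `v` to all formulas, relative to an
interpretation `I` of the connectives. -/
def eval {C A : Type} {ar : C → ℕ}
    (I : (c : C) → (Fin (ar c) → A) → A) (v : ℕ → A) : Fm C ar → A
  | .var n => v n
  | .app c args => I c fun i => eval I v (args i)

/-- Matrix consequence relation. -/
def Mdl {C A : Type} {ar : C → ℕ}
    (I : (c : C) → (Fin (ar c) → A) → A) (D : Set A)
    (Γ : Set (Fm C ar)) (φ : Fm C ar) : Prop :=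
  ∀ v : ℕ → A, (∀ ψ ∈ Γ, eval I v ψ ∈ D) → eval I v φ ∈ D

/-- Substitution. -/
def subst {C : Type} {ar : C → ℕ} (σ : ℕ → Fm C ar) : Fm C ar → Fm C ar
  | .var n => σ n
  | .app c args => .app c fun i => subst σ (args i)

variable {C₁ C₂ A₁ A₂ : Type} {ar₁ : C₁ → ℕ} {ar₂ : C₂ → ℕ}

/-- The coercion `∗_μ : A₁ ⊎ A₂ → A₁`. -/
def starMu (mu : A₂ → A₁) : A₁ ⊕ A₂ → A₁ := Sum.elim id mu

/-- The coercion `∗_λ : A₁ ⊎ A₂ → A₂`. -/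
def starLa (lam : A₁ → A₂) : A₁ ⊕ A₂ → A₂ := Sum.elim lam id

/-- Interpretation of the fibred matrix `M_(λ,μ)`. -/
def fibInterp (I₁ : (c : C₁) → (Fin (ar₁ c) → A₁) → A₁)
    (I₂ : (c : C₂) → (Fin (ar₂ c) → A₂) → A₂)
    (lam : A₁ → A₂) (mu : A₂ → A₁) :
    (c : C₁ ⊕ C₂) → (Fin (Sum.elim ar₁ ar₂ c) → A₁ ⊕ A₂) → A₁ ⊕ A₂
  | .inl c, args => Sum.inl (I₁ c fun i => starMu mu (args i))
  | .inr c, args => Sum.inr (I₂ c fun i => starLa lam (args i))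

/-- Designated values of the fibred matrix: `D₁ ⊎ D₂`. -/
def Dfib (D₁ : Set A₁) (D₂ : Set A₂) : Set (A₁ ⊕ A₂) :=
  Sum.inl '' D₁ ∪ Sum.inr '' D₂

/-- Admissible fibring pairs: `λ` and `μ` preserve and reflect designatedness. -/
def Admissible (D₁ : Set A₁) (D₂ : Set A₂) (lam : A₁ → A₂) (mu : A₂ → A₁) : Prop :=
  (∀ x, lam x ∈ D₂ ↔ x ∈ D₁) ∧ (∀ y, mu y ∈ D₁ ↔ y ∈ D₂)

/-- Recursive extension of a simple fibred valuation to the fibred language. -/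
def sfvExt (I₁ : (c : C₁) → (Fin (ar₁ c) → A₁) → A₁)
    (I₂ : (c : C₂) → (Fin (ar₂ c) → A₂) → A₂)
    (lam : A₁ → A₂) (mu : A₂ → A₁) (v : ℕ → A₁ ⊕ A₂) :
    Fm (C₁ ⊕ C₂) (Sum.elim ar₁ ar₂) → A₁ ⊕ A₂
  | .var n => v n
  | .app (.inl c) args =>
      Sum.inl (I₁ c fun i => starMu mu (sfvExt I₁ I₂ lam mu v (args i)))
  | .app (.inr c) args =>
      Sum.inr (I₂ c fun i => starLa lam (sfvExt I₁ I₂ lam mu v (args i)))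

/-- Inclusion of `L(C₁)` into the fibred language `L(C₁ ⊎ C₂)`. -/
def inj₁ (ar₂ : C₂ → ℕ) : Fm C₁ ar₁ → Fm (C₁ ⊕ C₂) (Sum.elim ar₁ ar₂)
  | .var n => .var n
  | .app c args => .app (Sum.inl c) fun i => inj₁ ar₂ (args i)

/-- `Repl c₁ c₂ h φ ψ`: `ψ` results from `φ` by replacing exactly one occurrence
of `c₁` by `c₂`. -/
inductive Repl {C : Type} {ar : C → ℕ} (c₁ c₂ : C) (h : ar c₁ = ar c₂) :
    Fm C ar → Fm C ar → Prop
  | top (args : Fin (ar c₁) → Fm C ar) :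
      Repl c₁ c₂ h (.app c₁ args) (.app c₂ fun i => args (Fin.cast h.symm i))
  | congr (c : C) (args args' : Fin (ar c) → Fm C ar) (j : Fin (ar c))
      (hj : Repl c₁ c₂ h (args j) (args' j))
      (hother : ∀ i, i ≠ j → args i = args' i) :
      Repl c₁ c₂ h (.app c args) (.app c args')

/-- `(c₁,c₂)`-associated formulas: a finite chain of single replacements of
`c₁` by `c₂` or vice versa (including equality). -/
def Assoc {C : Type} {ar : C → ℕ} (c₁ c₂ : C) (h : ar c₁ = ar c₂)
    (φ₁ φ₂ : Fm C ar) : Prop :=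
  Relation.EqvGen (Repl c₁ c₂ h) φ₁ φ₂


/-! Conjunction fragments of three-valued Łukasiewicz and Gödel logics. -/

/-- A three-element set of truth-values `0 < 1/2 < 1`. -/
inductive Three : Type | z | h | o
deriving DecidableEq

/-- Łukasiewicz strong conjunction `max(0, x + y − 1)` on `{0, 1/2, 1}`. -/
def andL : Three → Three → Three
  | .o, x => x | x, .o => x | _, _ => .z

/-- Gödel conjunction `min(x, y)` on `{0, 1/2, 1}`. -/
def andG : Three → Three → Three
  | .z, _ => .z | _, .z => .z
  | .h, _ => .h | _, .h => .h
  | .o, .o => .o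

/-- The map `λ₂` swapping `0` and `1/2` and fixing `1` (its own inverse `μ₂`). -/
def lam2 : Three → Three
  | .z => .h | .h => .z | .o => .o

/-- Interpretation of the Łukasiewicz conjunction fragment. -/
def IL : (c : Unit) → (Fin ((fun _ : Unit => 2) c) → Three) → Three :=
  fun _ a => andL (a 0) (a 1)

/-- Interpretation of the Gödel conjunction fragment. -/
def IG : (c : Unit) → (Fin ((fun _ : Unit => 2) c) → Three) → Three :=
  fun _ a => andG (a 0) (a 1)

/-- Designated set of the fibred matrix, concretely. -/
abbrev DF : Set (Three ⊕ Three) := Dfib ({Three.o} : Set Three) ({Three.o} : Set Three)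

lemma mem_DF (x : Three ⊕ Three) :
    x ∈ DF ↔ (x = Sum.inl Three.o ∨ x = Sum.inr Three.o) := by
  constructor
  · rintro (⟨a, ha, rfl⟩ | ⟨a, ha, rfl⟩) <;> simp_all
  · rintro (rfl | rfl)
    · exact Or.inl ⟨Three.o, rfl, rfl⟩
    · exact Or.inr ⟨Three.o, rfl, rfl⟩

lemma starMu_o (x : Three ⊕ Three) : starMu lam2 x = Three.o ↔ x ∈ DF := by
  rw [mem_DF]; rcases x with a | a <;> cases a <;> simp [starMu, lam2]

lemma starLa_o (x : Three ⊕ Three) : starLa lam2 x = Three.o ↔ x ∈ DF := by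
  rw [mem_DF]; rcases x with a | a <;> cases a <;> simp [starLa, lam2]

lemma andL_o (a b : Three) : andL a b = Three.o ↔ (a = Three.o ∧ b = Three.o) := by
  cases a <;> cases b <;> simp [andL]

lemma andG_o (a b : Three) : andG a b = Three.o ↔ (a = Three.o ∧ b = Three.o) := by
  cases a <;> cases b <;> simp [andG]

lemma app_des (v : ℕ → Three ⊕ Three) (c : Unit ⊕ Unit)
    (args : Fin (Sum.elim (fun _ : Unit => 2) (fun _ : Unit => 2) c) →
      Fm (Unit ⊕ Unit) (Sum.elim (fun _ => 2) (fun _ => 2))) :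
    eval (fibInterp IL IG lam2 lam2) v (.app c args) ∈ DF ↔
      (∀ i, eval (fibInterp IL IG lam2 lam2) v (args i) ∈ DF) := by
  rcases c with c | c
  · show Sum.inl (IL c _) ∈ DF ↔ _
    rw [mem_DF]
    simp only [IL, Sum.inl.injEq, reduceCtorEq, or_false]
    rw [andL_o, starMu_o, starMu_o]
    exact (Fin.forall_fin_two
      (p := fun i => eval (fibInterp IL IG lam2 lam2) v (args i) ∈ DF)).symm
  · show Sum.inr (IG c _) ∈ DF ↔ _
    rw [mem_DF]
    simp only [IG, Sum.inr.injEq, reduceCtorEq, false_or]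
    rw [andG_o, starLa_o, starLa_o]
    exact (Fin.forall_fin_two
      (p := fun i => eval (fibInterp IL IG lam2 lam2) v (args i) ∈ DF)).symm

lemma repl_des {φ ψ : Fm (Unit ⊕ Unit) (Sum.elim (fun _ => 2) (fun _ => 2))}
    (hr : Repl (Sum.inl ()) (Sum.inr ()) (by rfl) φ ψ) (v : ℕ → Three ⊕ Three) :
    (eval (fibInterp IL IG lam2 lam2) v φ ∈ DF ↔
      eval (fibInterp IL IG lam2 lam2) v ψ ∈ DF) := by
  induction hr with
  | top args =>
      rw [app_des, app_des]
      exact forall_congr' fun i => Iff.rfl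
  | congr c args args' j hj hother ih =>
      rw [app_des, app_des]
      refine forall_congr' fun i => ?_
      by_cases hij : i = j
      · subst hij; exact ih
      · rw [hother i hij]

/-- in the fibring of the conjunction fragments of `Ł₃` and `G₃`
via `(λ₂, μ₂)` (with `μ₂ = λ₂⁻¹ = λ₂`), the two conjunctions are identified
(all `(&_Ł,&_G)`-associated formulas are simultaneously designated), even
though `λ₂` is not a homomorphism between the conjunction fragments. -/
theorem luk_godel_identification :
    (¬ ∀ x y : Three, lam2 (andL x y) = andG (lam2 x) (lam2 y)) ∧
    (∀ φ₁ φ₂ : Fm (Unit ⊕ Unit) (Sum.elim (fun _ => 2) (fun _ => 2)),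
      Assoc (Sum.inl ()) (Sum.inr ()) (by rfl) φ₁ φ₂ →
      ∀ v : ℕ → Three ⊕ Three,
        (eval (fibInterp IL IG lam2 lam2) v φ₁ ∈
            Dfib ({Three.o} : Set Three) ({Three.o} : Set Three) ↔
          eval (fibInterp IL IG lam2 lam2) v φ₂ ∈
            Dfib ({Three.o} : Set Three) ({Three.o} : Set Three))) := by
  constructor
  · intro H
    have := H Three.h Three.h
    simp [lam2, andL, andG] at this
  · intro φ₁ φ₂ hassoc v
    induction hassoc with
    | rel _ _ h => exact repl_des h v
    | refl _ => exact Iff.rfl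
    | symm _ _ _ ih => exact ih.symm
    | trans _ _ _ _ _ ih₁ ih₂ => exact ih₁.trans ih₂

end Fibring
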